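/- There is no set K of q(q−3) points in PG(2,q), q ≥ 7, such that every line meets K in 0, q−3, or q−2 points. -/

import Mathlib

open Module Finset
open scoped Classical

section
variable {F : Type} [Field F] [Fintype F]

noncomputable instance : Fintype (Submodule F (Fin 3 → F)) :=
  Fintype.ofInjective (fun W => (W : Set (Fin 3 → F))) SetLike.coe_injective

/-- number of nonzero vectors in a submodule -/
lemma card_nonzero (W : Submodule F (Fin 3 → F)) :
    (univ.filter fun v : Fin 3 → F => v ∈ W ∧ v ≠ 0).card
      = Fintype.card F ^ (finrank F W) - 1 := by
  have h1 : (univ.filter fun v : Fin 3 → F => v ∈ W ∧ v ≠ 0).card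
      = Fintype.card {v : Fin 3 → F // v ∈ W ∧ v ≠ 0} := (Fintype.card_subtype _).symm
  have e : {v : Fin 3 → F // v ∈ W ∧ v ≠ 0} ≃ {w : W // w ≠ 0} :=
    { toFun := fun v => ⟨⟨v.1, v.2.1⟩, by
        intro h
        exact v.2.2 (by simpa [Submodule.mk_eq_zero] using h)⟩
      invFun := fun w => ⟨w.1.1, w.1.2, by
        intro h
        exact w.2 (Subtype.ext h)⟩
      left_inv := fun v => rfl
      right_inv := fun w => rfl }
  have h2 : Fintype.card {w : W // w ≠ 0} = Fintype.card W - 1 := by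
    rw [Fintype.card_subtype_compl, Fintype.card_subtype_eq]
  rw [h1, Fintype.card_congr e, h2, card_eq_pow_finrank (K := F) (V := W)]
end
section
variable {F : Type} [Field F] [Fintype F]

/-- the points of PG(2,q) -/
noncomputable def pts (F : Type) [Field F] [Fintype F] : Finset (Submodule F (Fin 3 → F)) :=
  univ.filter fun P => finrank F P = 1

noncomputable def lns (F : Type) [Field F] [Fintype F] : Finset (Submodule F (Fin 3 → F)) :=
  univ.filter fun L => finrank F L = 2

lemma card_pts_le (W : Submodule F (Fin 3 → F)) :
    ((pts F).filter (· ≤ W)).card * (Fintype.card F - 1)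
      = Fintype.card F ^ (finrank F W) - 1 := by
  have key : (univ.filter fun v : Fin 3 → F => v ∈ W ∧ v ≠ 0).card
      = ∑ P ∈ (pts F).filter (· ≤ W), (Fintype.card F - 1) := by
    rw [Finset.card_eq_sum_card_fiberwise
      (f := fun v => Submodule.span F {v}) (t := (pts F).filter (· ≤ W))
      (fun v hv => by
        simp only [Finset.mem_coe, mem_filter, mem_univ, true_and] at hv
        simp only [Finset.mem_coe, pts, mem_filter, mem_univ, true_and]
        exact ⟨finrank_span_singleton hv.2, Submodule.span_le.2 (by simpa using hv.1)⟩)]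
    refine Finset.sum_congr rfl fun P hP => ?_
    simp only [pts, mem_filter, mem_univ, true_and] at hP
    have hfib : ((univ.filter fun v : Fin 3 → F => v ∈ W ∧ v ≠ 0).filter
        fun v => Submodule.span F {v} = P)
        = univ.filter fun v : Fin 3 → F => v ∈ P ∧ v ≠ 0 := by
      ext v
      simp only [mem_filter, mem_univ, true_and]
      constructor
      · rintro ⟨⟨-, hv0⟩, hsp⟩
        exact ⟨hsp ▸ Submodule.mem_span_singleton_self v, hv0⟩
      · rintro ⟨hvP, hv0⟩
        refine ⟨⟨hP.2 hvP, hv0⟩, ?_⟩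
        exact Submodule.eq_of_le_of_finrank_le
          (Submodule.span_le.2 (by simpa using hvP))
          (le_of_eq (hP.1.trans (finrank_span_singleton hv0).symm))
    rw [hfib, card_nonzero, hP.1, pow_one]
  rw [Finset.sum_const, smul_eq_mul] at key
  rw [← key, card_nonzero]
end
section
variable {F : Type} [Field F] [Fintype F]

lemma two_le_q : 2 ≤ Fintype.card F := Fintype.one_lt_card

lemma card_pts_on_line {L : Submodule F (Fin 3 → F)} (hL : finrank F L = 2) :
    ((pts F).filter (· ≤ L)).card = Fintype.card F + 1 := by
  have h := card_pts_le L
  rw [hL] at h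
  have hq : 2 ≤ Fintype.card F := two_le_q
  have h2 : (Fintype.card F + 1) * (Fintype.card F - 1) = Fintype.card F ^ 2 - 1 := by
    have h1 : 1 ≤ Fintype.card F := by omega
    have h3 : 1 ≤ Fintype.card F ^ 2 := Nat.one_le_pow _ _ (by omega)
    zify [h1, h3]; ring
  exact Nat.eq_of_mul_eq_mul_right (by omega) (h.trans h2.symm)

lemma finrank_top_V : finrank F (⊤ : Submodule F (Fin 3 → F)) = 3 := by
  rw [finrank_top]; exact Module.finrank_fin_fun F

lemma card_pts : (pts F).card = Fintype.card F ^ 2 + Fintype.card F + 1 := by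
  have h := card_pts_le (F := F) ⊤
  rw [finrank_top_V] at h
  have hfil : (pts F).filter (· ≤ (⊤ : Submodule F (Fin 3 → F))) = pts F := by
    apply Finset.filter_true_of_mem; intro x _; exact le_top
  rw [hfil] at h
  have hq : 2 ≤ Fintype.card F := two_le_q
  have h2 : (Fintype.card F ^ 2 + Fintype.card F + 1) * (Fintype.card F - 1)
      = Fintype.card F ^ 3 - 1 := by
    have h1 : 1 ≤ Fintype.card F := by omega
    have h3 : 1 ≤ Fintype.card F ^ 3 := Nat.one_le_pow _ _ (by omega)
    zify [h1, h3]; ring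
  exact Nat.eq_of_mul_eq_mul_right (by omega) (h.trans h2.symm)

lemma rank_sup {P Q : Submodule F (Fin 3 → F)} (hP : finrank F P = 1)
    (hQ : finrank F Q = 1) (hne : P ≠ Q) : finrank F ↥(P ⊔ Q) = 2 := by
  have h := Submodule.finrank_sup_add_finrank_inf_eq P Q
  rw [hP, hQ] at h
  have hle : finrank F ↥(P ⊓ Q) ≤ 1 := by
    rw [← hP]; exact Submodule.finrank_mono inf_le_left
  rcases Nat.lt_or_ge (finrank F ↥(P ⊓ Q)) 1 with h0 | h1
  · omega
  · exfalso
    have hPQ : P ⊓ Q = P := Submodule.eq_of_le_of_finrank_le inf_le_left (by omega)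
    have : P = Q := Submodule.eq_of_le_of_finrank_le
      (hPQ ▸ inf_le_right) (by omega)
    exact hne this

lemma line_unique {P Q L : Submodule F (Fin 3 → F)} (hP : finrank F P = 1)
    (hQ : finrank F Q = 1) (hne : P ≠ Q) (hL : finrank F L = 2)
    (h1 : P ≤ L) (h2 : Q ≤ L) : L = P ⊔ Q :=
  (Submodule.eq_of_le_of_finrank_le (sup_le h1 h2)
    (by rw [rank_sup hP hQ hne]; exact hL.le)).symm

lemma sup_mem_lns {P Q : Submodule F (Fin 3 → F)} (hP : finrank F P = 1)
    (hQ : finrank F Q = 1) (hne : P ≠ Q) : P ⊔ Q ∈ lns F := by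
  simp only [lns, mem_filter, mem_univ, true_and]
  exact rank_sup hP hQ hne

lemma lns_filter_pair {P Q : Submodule F (Fin 3 → F)} (hP : finrank F P = 1)
    (hQ : finrank F Q = 1) (hne : P ≠ Q) :
    ((lns F).filter fun L => P ≤ L ∧ Q ≤ L) = {P ⊔ Q} := by
  ext L
  simp only [lns, mem_filter, mem_univ, true_and, mem_singleton]
  constructor
  · rintro ⟨hL, hPL, hQL⟩; exact line_unique hP hQ hne hL hPL hQL
  · rintro rfl
    exact ⟨rank_sup hP hQ hne, le_sup_left, le_sup_right⟩

lemma card_lns_through {P : Submodule F (Fin 3 → F)} (hP : finrank F P = 1) :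
    ((lns F).filter fun L => P ≤ L).card = Fintype.card F + 1 := by
  classical
  set q := Fintype.card F with hqdef
  have hq : 2 ≤ q := two_le_q
  have hPmem : P ∈ pts F := by simp [pts, hP]
  have key : ((pts F).erase P).card
      = ∑ L ∈ (lns F).filter (fun L => P ≤ L),
          ((((pts F).filter (· ≤ L)).erase P).card) := by
    rw [Finset.card_eq_sum_card_fiberwise (f := fun Q => P ⊔ Q)
      (t := (lns F).filter fun L => P ≤ L)
      (fun Q hQ => by
        simp only [Finset.mem_coe, Finset.mem_erase, pts, mem_filter, mem_univ, true_and] at hQ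
        simp only [Finset.mem_coe, mem_filter]
        exact ⟨sup_mem_lns hP hQ.2 (Ne.symm hQ.1), le_sup_left⟩)]
    refine Finset.sum_congr rfl fun L hL => ?_
    congr 1
    simp only [lns, mem_filter, mem_univ, true_and] at hL
    ext Q
    simp only [Finset.mem_erase, mem_filter, pts, mem_univ, true_and]
    constructor
    · rintro ⟨⟨hQP, hQ1⟩, hsup⟩
      exact ⟨hQP, hQ1, hsup ▸ le_sup_right⟩
    · rintro ⟨hQP, hQ1, hQL⟩
      exact ⟨⟨hQP, hQ1⟩, (line_unique hP hQ1 (Ne.symm hQP) hL.1 hL.2 hQL).symm⟩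
  rw [Finset.card_erase_of_mem hPmem, card_pts] at key
  have h2 : ∀ L ∈ (lns F).filter (fun L => P ≤ L),
      (((pts F).filter (· ≤ L)).erase P).card = q := by
    intro L hL
    simp only [lns, mem_filter, mem_univ, true_and] at hL
    rw [Finset.card_erase_of_mem (by simp [pts, mem_filter, hP, hL.2]),
      card_pts_on_line hL.1]
    omega
  rw [Finset.sum_congr rfl h2, Finset.sum_const, smul_eq_mul] at key
  rw [← hqdef] at key
  have h3 : q ^ 2 + q + 1 - 1 = (q + 1) * q := by
    have : (q + 1) * q = q ^ 2 + q := by ring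
    omega
  rw [h3] at key
  exact Nat.eq_of_mul_eq_mul_right (by omega) key.symm

lemma swap_sum {α β : Type*} (A : Finset α) (B : Finset β) (p : α → β → Prop) :
    ∑ b ∈ B, (A.filter fun a => p a b).card = ∑ a ∈ A, (B.filter fun b => p a b).card := by
  simp only [Finset.card_filter]
  exact Finset.sum_comm

lemma lns_filter_pair' {P Q : Submodule F (Fin 3 → F)} (hP : finrank F P = 1)
    (hQ : finrank F Q = 1) (hne : P ≠ Q) :
    (((lns F).filter fun L => P ≤ L).filter fun L => Q ≤ L) = {P ⊔ Q} := by
  ext L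
  simp only [lns, mem_filter, mem_univ, true_and, mem_singleton]
  constructor
  · rintro ⟨⟨hL, hPL⟩, hQL⟩; exact line_unique hP hQ hne hL hPL hQL
  · rintro rfl
    exact ⟨⟨rank_sup hP hQ hne, le_sup_left⟩, le_sup_right⟩

lemma swap_sum_w {α β : Type*} (A : Finset α) (B : Finset β) (p : α → β → Prop)
    (f : β → ℕ) :
    ∑ b ∈ B, ∑ _a ∈ A.filter (fun a => p a b), f b
      = ∑ a ∈ A, ∑ b ∈ B.filter (fun b => p a b), f b := by
  simp only [Finset.sum_filter]
  exact Finset.sum_comm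

lemma card_lns : (lns F).card = Fintype.card F ^ 2 + Fintype.card F + 1 := by
  set q := Fintype.card F with hqdef
  have hq : 2 ≤ q := two_le_q
  have h := swap_sum (pts F) (lns F) (fun P L => P ≤ L)
  have hL : ∀ L ∈ lns F, ((pts F).filter fun P => P ≤ L).card = q + 1 := by
    intro L hL
    simp only [lns, mem_filter, mem_univ, true_and] at hL
    exact card_pts_on_line hL
  have hP : ∀ P ∈ pts F, ((lns F).filter fun L => P ≤ L).card = q + 1 := by
    intro P hP
    simp only [pts, mem_filter, mem_univ, true_and] at hP
    exact card_lns_through hP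
  rw [Finset.sum_congr rfl hL, Finset.sum_congr rfl hP, Finset.sum_const,
    Finset.sum_const, smul_eq_mul, smul_eq_mul, card_pts] at h
  rw [← hqdef] at h
  exact Nat.eq_of_mul_eq_mul_right (show 0 < q + 1 by omega) h
end

/-- there is no set `K` of `q(q-3)` points in `PG(2,q)`, `q ≥ 7`,
such that every line meets `K` in `0`, `q-3`, or `q-2` points. -/
theorem stmt14 (q : ℕ) (hq : 7 ≤ q)
    (F : Type) [Field F] [Fintype F] (hF : Fintype.card F = q)
    (K : Finset (Submodule F (Fin 3 → F))) (hpts : ∀ P ∈ K, finrank F P = 1)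
    (hcard : K.card = q * (q - 3))
    (hlines : ∀ L : Submodule F (Fin 3 → F), finrank F L = 2 →
      (K.filter fun P => P ≤ L).card = 0 ∨ (K.filter fun P => P ≤ L).card = q - 3 ∨
        (K.filter fun P => P ≤ L).card = q - 2) :
    False := by
  classical
  set n : Submodule F (Fin 3 → F) → ℕ := fun L => (K.filter fun P => P ≤ L).card with hndef
  have hKpts : K ⊆ pts F := fun P hP => by simp [pts, hpts P hP]
  have hlines' : ∀ L ∈ lns F, n L = 0 ∨ n L = q - 3 ∨ n L = q - 2 := by
    intro L hL
    simp only [lns, mem_filter, mem_univ, true_and] at hL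
    exact hlines L hL
  -- E2
  have E2 : ∑ L ∈ lns F, n L = K.card * (q + 1) := by
    have h := swap_sum K (lns F) (fun P L => P ≤ L)
    have h2 : ∀ P ∈ K, ((lns F).filter fun L => P ≤ L).card = q + 1 := by
      intro P hP
      rw [card_lns_through (hpts P hP), hF]
    rw [Finset.sum_congr rfl h2, Finset.sum_const, smul_eq_mul] at h
    exact h
  -- sum of n over lines through a point
  have hsum_through : ∀ P : Submodule F (Fin 3 → F), finrank F P = 1 →
      ∑ M ∈ (lns F).filter (fun M => P ≤ M), n M
        = K.card + (if P ∈ K then q else 0) := by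
    intro P hP1
    have hsw := swap_sum K ((lns F).filter fun M => P ≤ M) (fun Q M => Q ≤ M)
    rw [hsw]
    have hterm : ∀ Q ∈ K, ((((lns F).filter fun M => P ≤ M).filter fun M => Q ≤ M)).card
        = 1 + (if Q = P then q else 0) := by
      intro Q hQ
      by_cases hQP : Q = P
      · subst hQP
        have : (((lns F).filter fun M => Q ≤ M).filter fun M => Q ≤ M)
            = (lns F).filter fun M => Q ≤ M :=
          Finset.filter_true_of_mem fun M hM => (Finset.mem_filter.1 hM).2
        rw [this, card_lns_through hP1, hF]
        simp [add_comm]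
      · rw [lns_filter_pair' hP1 (hpts Q hQ) (Ne.symm hQP), Finset.card_singleton]
        simp [hQP]
    rw [Finset.sum_congr rfl hterm, Finset.sum_add_distrib, Finset.sum_const,
      smul_eq_mul, mul_one, Finset.sum_ite_eq' K P (fun _ => q)]
  -- E3
  have E3 : ∑ L ∈ lns F, (n L) ^ 2 = K.card * (K.card + q) := by
    have hstep : ∀ L ∈ lns F, (n L) ^ 2 = ∑ _P ∈ K.filter (fun P => P ≤ L), n L := by
      intro L _
      rw [Finset.sum_const, smul_eq_mul, sq, hndef]
    rw [Finset.sum_congr rfl hstep]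
    have hsw := swap_sum_w K (lns F) (fun P L => P ≤ L) n
    rw [hsw]
    have hterm : ∀ P ∈ K, ∑ L ∈ (lns F).filter (fun L => P ≤ L), n L
        = K.card + q := by
      intro P hP
      rw [hsum_through P (hpts P hP)]
      simp [hP]
    rw [Finset.sum_congr rfl hterm, Finset.sum_const, smul_eq_mul]
  -- partition of lines by n value
  set s0 := (lns F).filter (fun L => n L = 0) with hs0
  set s1 := ((lns F).filter (fun L => ¬ n L = 0)).filter (fun L => n L = q - 3) with hs1
  set s2 := ((lns F).filter (fun L => ¬ n L = 0)).filter (fun L => ¬ n L = q - 3) with hs2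
  have hsplit : ∀ f : Submodule F (Fin 3 → F) → ℕ,
      ∑ L ∈ lns F, f L = ∑ L ∈ s0, f L + (∑ L ∈ s1, f L + ∑ L ∈ s2, f L) := by
    intro f
    conv_lhs => rw [← Finset.sum_filter_add_sum_filter_not (lns F) (fun L => n L = 0) f]
    congr 1
    exact (Finset.sum_filter_add_sum_filter_not _ _ f).symm
  have hs2val : ∀ L ∈ s2, n L = q - 2 := by
    intro L hL
    rw [hs2] at hL
    have h1 := Finset.mem_filter.1 hL
    have h2 := Finset.mem_filter.1 h1.1
    rcases hlines' L h2.1 with h | h | h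
    · exact absurd h h2.2
    · exact absurd h h1.2
    · exact h
  have hs1val : ∀ L ∈ s1, n L = q - 3 := fun L hL => (Finset.mem_filter.1 hL).2
  have hs0val : ∀ L ∈ s0, n L = 0 := fun L hL => (Finset.mem_filter.1 hL).2
  have e1 : s0.card + (s1.card + s2.card) = q ^ 2 + q + 1 := by
    have h := hsplit (fun _ => 1)
    simp only [Finset.sum_const, smul_eq_mul, mul_one] at h
    rw [card_lns, hF] at h
    omega
  have e2 : s1.card * (q - 3) + s2.card * (q - 2) = q * (q - 3) * (q + 1) := by
    have h := hsplit n
    rw [Finset.sum_congr rfl hs0val, Finset.sum_congr rfl hs1val,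
      Finset.sum_congr rfl hs2val, Finset.sum_const, Finset.sum_const,
      Finset.sum_const, smul_eq_mul, smul_eq_mul, smul_eq_mul, mul_zero,
      zero_add, E2, hcard] at h
    omega
  have e3 : s1.card * (q - 3) ^ 2 + s2.card * (q - 2) ^ 2
      = q * (q - 3) * (q * (q - 3) + q) := by
    have h := hsplit (fun L => n L ^ 2)
    have h0 : ∀ L ∈ s0, n L ^ 2 = 0 := fun L hL => by rw [hs0val L hL]; ring
    have h1 : ∀ L ∈ s1, n L ^ 2 = (q - 3) ^ 2 := fun L hL => by rw [hs1val L hL]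
    have h2 : ∀ L ∈ s2, n L ^ 2 = (q - 2) ^ 2 := fun L hL => by rw [hs2val L hL]
    rw [Finset.sum_congr rfl h0, Finset.sum_congr rfl h1, Finset.sum_congr rfl h2,
      Finset.sum_const, Finset.sum_const, Finset.sum_const, smul_eq_mul,
      smul_eq_mul, smul_eq_mul, mul_zero, zero_add, E3, hcard] at h
    omega
  -- move to the integers and solve
  have h3q : 3 ≤ q := by omega
  have e2z : (s1.card : ℤ) * ((q : ℤ) - 3) + (s2.card : ℤ) * ((q : ℤ) - 2)
      = (q : ℤ) * ((q : ℤ) - 3) * ((q : ℤ) + 1) := by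
    have := e2
    zify [h3q, show 2 ≤ q by omega] at this
    linarith
  have e3z : (s1.card : ℤ) * ((q : ℤ) - 3) ^ 2 + (s2.card : ℤ) * ((q : ℤ) - 2) ^ 2
      = (q : ℤ) * ((q : ℤ) - 3) * ((q : ℤ) * ((q : ℤ) - 3) + (q : ℤ)) := by
    have := e3
    zify [h3q, show 2 ≤ q by omega] at this
    linarith
  have hC : ((q : ℤ) - 2) * (s2.card : ℤ) = 3 * (q : ℤ) * ((q : ℤ) - 3) := by
    linear_combination e3z - ((q : ℤ) - 3) * e2z
  have hdvd : ((q : ℤ) - 2) * (3 * ((q : ℤ) - 1) - (s2.card : ℤ)) = 6 := by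
    linear_combination -hC
  have hq8 : q = 8 := by
    have hle : ((q : ℤ) - 2) ≤ 6 := Int.le_of_dvd (by norm_num) ⟨_, hdvd.symm⟩
    have hq8' : q ≤ 8 := by omega
    rcases (by omega : q = 7 ∨ q = 8) with h | h
    · exfalso
      subst h
      norm_num at hdvd
      omega
    · exact h
  subst hq8
  have hc20 : s2.card = 20 := by
    norm_num at hC
    omega
  have hb48 : s1.card = 48 := by
    norm_num at e2
    omega
  have ha5 : s0.card = 5 := by
    norm_num at e1
    omega
  -- geometric part for q = 8
  have hK40 : K.card = 40 := by rw [hcard]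
  obtain ⟨L₀, hL₀⟩ : s2.Nonempty := Finset.card_pos.1 (by omega)
  have hL₀lns : L₀ ∈ lns F := (Finset.mem_filter.1 (Finset.mem_filter.1 hL₀).1).1
  have hL₀rank : finrank F ↥L₀ = 2 := by
    simpa [lns] using hL₀lns
  have hnL₀ : n L₀ = 6 := by simpa using hs2val L₀ hL₀
  -- the three points of L₀ off K
  set D := ((pts F).filter fun P => P ≤ L₀) \ (K.filter fun P => P ≤ L₀) with hD
  have hDcard : D.card = 3 := by
    rw [hD, Finset.card_sdiff_of_subset (Finset.filter_subset_filter _ hKpts),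
      card_pts_on_line hL₀rank, hF]
    have h6 : (K.filter fun P => P ≤ L₀).card = 6 := hnL₀
    omega
  have hDmem : ∀ P ∈ D, finrank F ↥P = 1 ∧ P ≤ L₀ ∧ P ∉ K := by
    intro P hP
    rw [hD, Finset.mem_sdiff] at hP
    obtain ⟨hP1, hP2⟩ := hP
    simp only [pts, Finset.mem_filter, Finset.mem_univ, true_and] at hP1
    exact ⟨hP1.1, hP1.2, fun hPK => hP2 (Finset.mem_filter.2 ⟨hPK, hP1.2⟩)⟩
  -- zero-lines through a point of D
  set zl : Submodule F (Fin 3 → F) → Finset (Submodule F (Fin 3 → F)) :=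
    fun P => ((lns F).filter fun M => P ≤ M).filter fun M => n M = 0 with hzl
  have hzero : ∀ P ∈ D, 2 ≤ (zl P).card := by
    intro P hP
    obtain ⟨hP1, hPL, hPK⟩ := hDmem P hP
    have hsum := hsum_through P hP1
    rw [if_neg hPK, add_zero, hK40] at hsum
    set T := (lns F).filter fun M => P ≤ M with hT
    have hTcard : T.card = 9 := by rw [hT, card_lns_through hP1, hF]
    have hL₀T : L₀ ∈ T := Finset.mem_filter.2 ⟨hL₀lns, hPL⟩
    have hsum34 : ∑ M ∈ T.erase L₀, n M = 34 := by
      have h := Finset.sum_erase_add T n hL₀T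
      rw [hsum, hnL₀] at h
      omega
    set Z := (T.erase L₀).filter (fun M => n M = 0) with hZ
    set N := (T.erase L₀).filter (fun M => ¬ n M = 0) with hN
    have hZN : Z.card + N.card = 8 := by
      rw [hZ, hN, Finset.card_filter_add_card_filter_not,
        Finset.card_erase_of_mem hL₀T, hTcard]
    have hNlow : ∀ M ∈ N, 5 ≤ n M := by
      intro M hM
      rw [hN] at hM
      have h1 := Finset.mem_filter.1 hM
      have hMlns : M ∈ lns F :=
        (Finset.mem_filter.1 (Finset.mem_erase.1 h1.1).2).1
      rcases hlines' M hMlns with h | h | h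
      · exact absurd h h1.2
      · omega
      · omega
    have hNsum : ∑ M ∈ Z, n M + ∑ M ∈ N, n M = 34 := by
      rw [hZ, hN, Finset.sum_filter_add_sum_filter_not, hsum34]
    have hZsum0 : ∑ M ∈ Z, n M = 0 :=
      Finset.sum_eq_zero fun M hM => (Finset.mem_filter.1 hM).2
    have hNcard : 5 * N.card ≤ 34 := by
      calc 5 * N.card = ∑ _M ∈ N, 5 := by rw [Finset.sum_const, smul_eq_mul, mul_comm]
        _ ≤ ∑ M ∈ N, n M := Finset.sum_le_sum hNlow
        _ ≤ 34 := by omega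
    have hZ2 : 2 ≤ Z.card := by omega
    have hZsub : Z ⊆ zl P := by
      intro M hM
      rw [hZ] at hM
      have h1 := Finset.mem_filter.1 hM
      exact Finset.mem_filter.2 ⟨(Finset.mem_erase.1 h1.1).2, h1.2⟩
    exact le_trans hZ2 (Finset.card_le_card hZsub)
  -- the zero-line sets are subsets of s0 and pairwise disjoint
  have hzlsub : ∀ P, zl P ⊆ s0 := by
    intro P M hM
    have h1 := Finset.mem_filter.1 hM
    exact Finset.mem_filter.2 ⟨(Finset.mem_filter.1 h1.1).1, h1.2⟩
  have hdisj : ∀ P ∈ D, ∀ P' ∈ D, P ≠ P' → Disjoint (zl P) (zl P') := by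
    intro P hP P' hP' hne
    obtain ⟨h1, h2, _⟩ := hDmem P hP
    obtain ⟨h1', h2', _⟩ := hDmem P' hP'
    rw [Finset.disjoint_left]
    intro M hM hM'
    have hm := Finset.mem_filter.1 hM
    have hm' := Finset.mem_filter.1 hM'
    have hMlns := (Finset.mem_filter.1 hm.1).1
    have hMP : P ≤ M := (Finset.mem_filter.1 hm.1).2
    have hMP' : P' ≤ M := (Finset.mem_filter.1 hm'.1).2
    have hMrank : finrank F ↥M = 2 := by simpa [lns] using hMlns
    have hMeq : M = P ⊔ P' := line_unique h1 h1' hne hMrank hMP hMP'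
    have hLeq : L₀ = P ⊔ P' := line_unique h1 h1' hne hL₀rank h2 h2'
    have : n M = 6 := by rw [hMeq, ← hLeq, hnL₀]
    rw [hm.2] at this
    omega
  -- conclude
  obtain ⟨P₁, P₂, P₃, h12, h13, h23, hDeq⟩ := Finset.card_eq_three.1 hDcard
  have hP₁ : P₁ ∈ D := by rw [hDeq]; simp
  have hP₂ : P₂ ∈ D := by rw [hDeq]; simp
  have hP₃ : P₃ ∈ D := by rw [hDeq]; simp
  have hd12 := hdisj P₁ hP₁ P₂ hP₂ h12
  have hd13 := hdisj P₁ hP₁ P₃ hP₃ h13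
  have hd23 := hdisj P₂ hP₂ P₃ hP₃ h23
  have hunion : (zl P₁ ∪ zl P₂ ∪ zl P₃).card
      = (zl P₁).card + (zl P₂).card + (zl P₃).card := by
    rw [Finset.card_union_of_disjoint (Finset.disjoint_union_left.2 ⟨hd13, hd23⟩),
      Finset.card_union_of_disjoint hd12]
  have hle6 : 6 ≤ s0.card := by
    have h1 := hzero P₁ hP₁
    have h2 := hzero P₂ hP₂
    have h3 := hzero P₃ hP₃
    have hsub : zl P₁ ∪ zl P₂ ∪ zl P₃ ⊆ s0 :=
      Finset.union_subset (Finset.union_subset (hzlsub P₁) (hzlsub P₂)) (hzlsub P₃)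
    have := Finset.card_le_card hsub
    omega
  omega
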